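/- For every permutation π of {1,…,n}, the strip swap distance satisfies SSD(π) ≥ ⌈(#strips(π) − 1)/4⌉. -/

import Mathlib

/-- A run: each element is the successor of the previous one. -/
def IsRun (l : List ℕ) : Prop := l.Chain' (fun a b => b = a + 1)

/-- `noLink x y`: the optional value `y` does not continue the optional value `x` by +1. -/
def noLink (x y : Option ℕ) : Prop := ∀ a ∈ x, ∀ b ∈ y, b ≠ a + 1

/-- Number of "breaks" between consecutive entries (places where the successor chain stops). -/
def breaks (l : List ℕ) : ℕ := (l.zip l.tail).countP (fun p => decide (p.2 ≠ p.1 + 1))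

/-- Number of strips (maximal runs of consecutive increasing values). -/
def numStrips (l : List ℕ) : ℕ := if l = [] then 0 else 1 + breaks l

/-- Number of reversals (descents): adjacent pairs with the left entry larger. -/
def revCount (l : List ℕ) : ℕ := (l.zip l.tail).countP (fun p => decide (p.2 < p.1))

/-- `π'` is obtained from `π` by swapping two (disjoint) strips of `π`. -/
def StripSwap (π π' : List ℕ) : Prop :=
  ∃ A X B Y C : List ℕ,
    π = A ++ X ++ B ++ Y ++ C ∧
    π' = A ++ Y ++ B ++ X ++ C ∧
    X ≠ [] ∧ Y ≠ [] ∧ IsRun X ∧ IsRun Y ∧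
    noLink A.getLast? X.head? ∧ noLink X.getLast? (B ++ Y ++ C).head? ∧
    noLink (A ++ X ++ B).getLast? Y.head? ∧ noLink Y.getLast? C.head?

/-- `π'` is obtained from `π` by removing one strip and reinserting it at another position. -/
def BlockMove (π π' : List ℕ) : Prop :=
  ∃ A X B A' B' : List ℕ,
    π = A ++ X ++ B ∧
    X ≠ [] ∧ IsRun X ∧
    noLink A.getLast? X.head? ∧ noLink X.getLast? B.head? ∧
    A' ++ B' = A ++ B ∧ A' ≠ A ∧
    π' = A' ++ X ++ B'

/-- `StepsTo R k a b`: `b` is reachable from `a` in exactly `k` steps of the relation `R`. -/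
def StepsTo (R : List ℕ → List ℕ → Prop) : ℕ → List ℕ → List ℕ → Prop
  | 0 => fun a b => a = b
  | k + 1 => fun a b => ∃ c, R a c ∧ StepsTo R k c b

/-- The identity permutation of `{1,…,n}` in one-line notation. -/
def idPerm (n : ℕ) : List ℕ := List.range' 1 n

/-- Strip swap distance to the identity permutation of `{1,…,n}`. -/
noncomputable def SSD (n : ℕ) (π : List ℕ) : ℕ :=
  sInf {m | StepsTo StripSwap m π (idPerm n)}

/-- Block sorting distance to the identity permutation of `{1,…,n}`. -/
noncomputable def BS (n : ℕ) (π : List ℕ) : ℕ :=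
  sInf {m | StepsTo BlockMove m π (idPerm n)}

/- ===== auxiliary lemmas ===== -/

/-- junction indicator -/
def bj : Option ℕ → Option ℕ → ℕ
  | some a, some b => if b = a + 1 then 0 else 1
  | _, _ => 0

lemma bj_le_one (x y : Option ℕ) : bj x y ≤ 1 := by
  cases x <;> cases y <;> simp [bj] <;> split <;> simp

lemma breaks_nil : breaks [] = 0 := rfl

lemma breaks_cons (a : ℕ) (t : List ℕ) :
    breaks (a :: t) = bj (some a) t.head? + breaks t := by
  cases t with
  | nil => simp [breaks, bj]
  | cons b s =>
    show List.countP _ ((a, b) :: (b :: s).zip s) = _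
    rw [List.countP_cons]
    by_cases hb : b = a + 1 <;> simp [bj, hb, breaks] <;> omega

lemma breaks_append (l l' : List ℕ) :
    breaks (l ++ l') = breaks l + bj l.getLast? l'.head? + breaks l' := by
  induction l with
  | nil => simp [breaks_nil, bj]
  | cons a l ih =>
    rw [List.cons_append, breaks_cons, breaks_cons, ih]
    cases l with
    | nil => simp [breaks_nil, bj]
    | cons b s => simp only [List.cons_append, List.head?_cons, List.getLast?_cons_cons]; omega

lemma breaks_le_sum (l l' : List ℕ) :
    breaks (l ++ l') ≤ breaks l + breaks l' + 1 ∧ breaks l + breaks l' ≤ breaks (l ++ l') := by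
  rw [breaks_append]
  have := bj_le_one l.getLast? l'.head?
  omega

lemma stripswap_breaks {π π' : List ℕ} (h : StripSwap π π') : breaks π ≤ breaks π' + 4 := by
  obtain ⟨A, X, B, Y, C, h1, h2, -⟩ := h
  subst h1; subst h2
  have e1 := breaks_le_sum (A ++ X ++ B ++ Y) C
  have e2 := breaks_le_sum (A ++ X ++ B) Y
  have e3 := breaks_le_sum (A ++ X) B
  have e4 := breaks_le_sum A X
  have f1 := breaks_le_sum (A ++ Y ++ B ++ X) C
  have f2 := breaks_le_sum (A ++ Y ++ B) X
  have f3 := breaks_le_sum (A ++ Y) B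
  have f4 := breaks_le_sum A Y
  omega

lemma stripswap_numStrips {π π' : List ℕ} (h : StripSwap π π') :
    numStrips π ≤ numStrips π' + 4 := by
  have hb := stripswap_breaks h
  obtain ⟨A, X, B, Y, C, h1, h2, hX, hY, -⟩ := h
  have hπ : π ≠ [] := by subst h1; simp [hX]
  have hπ' : π' ≠ [] := by subst h2; simp [hY]
  simp only [numStrips, if_neg hπ, if_neg hπ']
  omega

lemma steps_bound : ∀ (m : ℕ) (π τ : List ℕ), StepsTo StripSwap m π τ →
    numStrips π ≤ numStrips τ + 4 * m := by
  intro m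
  induction m with
  | zero => intro π τ h; cases h; omega
  | succ k ih =>
    rintro π τ ⟨c, hc, hs⟩
    have h1 := stripswap_numStrips hc
    have h2 := ih c τ hs
    omega

lemma isRun_range' : ∀ (n s : ℕ), IsRun (List.range' s n) := by
  intro n
  induction n with
  | zero => intro s; simp [IsRun, List.Chain']
  | succ n ih =>
    intro s
    rw [List.range'_succ, IsRun, List.Chain', List.isChain_cons]
    refine ⟨?_, ih (s + 1)⟩
    intro y hy
    cases n with
    | zero => simp at hy
    | succ m => rw [List.range'_succ] at hy; simp at hy; omega

lemma run_breaks {l : List ℕ} (h : IsRun l) : breaks l = 0 := by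
  induction l with
  | nil => rfl
  | cons a t ih =>
    rw [IsRun, List.Chain', List.isChain_cons] at h
    rw [breaks_cons, ih h.2]
    cases ht : t.head? with
    | none => simp [bj]
    | some b => have := h.1 b ht; simp [bj, this]

lemma run_eq_range' : ∀ (t : List ℕ) (a : ℕ), IsRun (a :: t) →
    a :: t = List.range' a (t.length + 1) := by
  intro t
  induction t with
  | nil => intro a _; simp [List.range'_succ]
  | cons b s ih =>
    intro a h
    rw [IsRun, List.Chain', List.isChain_cons] at h
    have hb : b = a + 1 := h.1 b rfl
    have := ih b h.2
    rw [List.range'_succ, List.length_cons, ← hb, ← this]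

/-- split off the maximal initial run -/
def runSplit : List ℕ → List ℕ × List ℕ
  | [] => ([], [])
  | [a] => ([a], [])
  | a :: b :: t =>
    if b = a + 1 then
      ((runSplit (b :: t)).1.cons a, (runSplit (b :: t)).2)
    else ([a], b :: t)

lemma runSplit_spec : ∀ (l : List ℕ), l ≠ [] →
    l = (runSplit l).1 ++ (runSplit l).2 ∧ IsRun (runSplit l).1 ∧ (runSplit l).1 ≠ [] ∧
      (runSplit l).1.head? = l.head? ∧ noLink (runSplit l).1.getLast? (runSplit l).2.head?
  | [a], _ => by simp [runSplit, IsRun, List.Chain', noLink]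
  | a :: b :: t, _ => by
    by_cases hb : b = a + 1
    · obtain ⟨h1, h2, h3, h4, h5⟩ := runSplit_spec (b :: t) (by simp)
      simp only [runSplit, if_pos hb, List.cons_append]
      obtain ⟨c, q, hq⟩ := List.exists_cons_of_ne_nil h3
      refine ⟨by rw [← h1], ?_, by simp, ?_, ?_⟩
      · rw [IsRun, List.Chain', List.isChain_cons]
        refine ⟨?_, h2⟩
        intro y hy
        rw [h4] at hy; simp at hy; omega
      · simp
      · rw [hq, List.getLast?_cons_cons, ← hq]
        exact h5
    · simp only [runSplit, if_neg hb]
      refine ⟨by simp, by simp [IsRun, List.Chain'], by simp, by simp, ?_⟩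
      intro x hx y hy
      simp at hx hy
      omega

lemma getLast?_idPerm (k : ℕ) : (idPerm k).getLast? = if k = 0 then none else some k := by
  cases k with
  | zero => rfl
  | succ j =>
    rw [idPerm, List.range'_concat, List.getLast?_concat]
    simp
    omega

lemma idPerm_append_run (k m : ℕ) : idPerm k ++ List.range' (k + 1) m = idPerm (k + m) := by
  have := List.range'_append (s := 1) (m := k) (n := m) (step := 1)
  simp only [one_mul] at this
  rw [idPerm, idPerm]
  rw [show 1 + k = k + 1 by omega] at this
  exact this

lemma mem_of_getLast?_append {l1 l2 : List ℕ} {a : ℕ} (h2 : l2 ≠ [])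
    (h : (l1 ++ l2).getLast? = some a) : a ∈ l2 := by
  rw [List.getLast?_append] at h
  cases hl : l2.getLast? with
  | none => exact absurd (List.getLast?_eq_none_iff.mp hl) h2
  | some b =>
    rw [hl] at h
    simp at h
    exact h ▸ List.mem_of_getLast? hl

lemma sortable (n : ℕ) : ∀ (N : ℕ) (T : List ℕ) (k : ℕ), T.length ≤ N →
    (idPerm k ++ T).Perm (idPerm n) →
    ∃ m, StepsTo StripSwap m (idPerm k ++ T) (idPerm n) := by
  intro N
  induction N with
  | zero =>
    intro T k hl hp
    have hT : T = [] := List.length_eq_zero_iff.mp (Nat.le_zero.mp hl)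
    subst hT
    have hk : k = n := by
      have := hp.length_eq
      simpa [idPerm] using this
    exact ⟨0, by simp [StepsTo, hk]⟩
  | succ N ih =>
    intro T k hl hp
    rcases eq_or_ne T [] with rfl | hT
    · have hk : k = n := by
        have := hp.length_eq
        simpa [idPerm] using this
      exact ⟨0, by simp [StepsTo, hk]⟩
    · obtain ⟨hsplit, hrunX, hXne, hheadX, hlinkX⟩ := runSplit_spec T hT
      set X := (runSplit T).1 with hXdef
      set s := (runSplit T).2 with hsdef
      obtain ⟨x, X', hXc⟩ := List.exists_cons_of_ne_nil hXne
      have hXr : X = List.range' x (X'.length + 1) := by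
        rw [hXc]; exact run_eq_range' X' x (hXc ▸ hrunX)
      have hmemT : ∀ a ∈ T, 1 ≤ a ∧ a < 1 + n := by
        intro a ha
        have : a ∈ idPerm n := hp.mem_iff.mp (List.mem_append.mpr (Or.inr ha))
        exact List.mem_range'_1.mp this
      have hnodup : (idPerm k ++ T).Nodup := by
        rw [hp.nodup_iff]
        exact List.nodup_range'
      have hknotT : k ∉ T := by
        rcases Nat.eq_zero_or_pos k with hk0 | hk0
        · intro hk; have := (hmemT k hk).1; omega
        · intro hk
          have hkA : k ∈ idPerm k := List.mem_range'_1.mpr ⟨hk0, by omega⟩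
          exact (List.nodup_append'.mp hnodup).2.2 hkA hk
      by_cases hx : x = k + 1
      · -- merge first run with sorted prefix
        have heq : idPerm k ++ T = idPerm (k + (X'.length + 1)) ++ s := by
          rw [hsplit, hXr, hx, ← List.append_assoc, idPerm_append_run]
        have hlen : s.length ≤ N := by
          have : T.length = X.length + s.length := by rw [hsplit]; simp
          have hX1 : 0 < X.length := List.length_pos_iff.mpr hXne
          omega
        obtain ⟨m, hm⟩ := ih s (k + (X'.length + 1)) hlen (heq ▸ hp)
        exact ⟨m, heq ▸ hm⟩
      · -- swap case
        have hkn : k < n := by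
          have hlen := hp.length_eq
          simp only [idPerm, List.length_append, List.length_range'] at hlen
          have := List.length_pos_iff.mpr hT
          omega
        have hk1T : k + 1 ∈ T := by
          have h1 : k + 1 ∈ idPerm k ++ T :=
            hp.mem_iff.mpr (List.mem_range'_1.mpr ⟨by omega, by omega⟩)
          rcases List.mem_append.mp h1 with h | h
          · exfalso; have := List.mem_range'_1.mp h; omega
          · exact h
        have hk1X : k + 1 ∉ X := by
          intro hmem
          rw [hXr] at hmem
          have hxx := List.mem_range'_1.mp hmem
          have hxk : x ≤ k := by omega
          have hkX : k ∈ X := by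
            rw [hXr]; exact List.mem_range'_1.mpr ⟨hxk, by omega⟩
          exact hknotT (hsplit ▸ List.mem_append.mpr (Or.inl hkX))
        have hk1s : k + 1 ∈ s := by
          rw [hsplit] at hk1T
          rcases List.mem_append.mp hk1T with h | h
          · exact absurd h hk1X
          · exact h
        obtain ⟨B, r, hs⟩ := List.append_of_mem hk1s
        obtain ⟨hsplit2, hrunS, hSne, hheadS, hlinkS⟩ := runSplit_spec ((k + 1) :: r) (by simp)
        set S := (runSplit ((k + 1) :: r)).1 with hSdef
        set V := (runSplit ((k + 1) :: r)).2 with hVdef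
        obtain ⟨s0, S', hSc⟩ := List.exists_cons_of_ne_nil hSne
        have hs0 : s0 = k + 1 := by
          rw [hSc] at hheadS; simp at hheadS; exact hheadS
        have hSr : S = List.range' (k + 1) (S'.length + 1) := by
          rw [hSc, hs0]
          exact run_eq_range' S' (k + 1) (by rw [← hs0, ← hSc]; exact hrunS)
        have hBXVsubT : ∀ a, a ∈ X ∨ a ∈ B → a ∈ T := by
          intro a ha
          rcases ha with h | h
          · exact hsplit ▸ List.mem_append.mpr (Or.inl h)
          · refine hsplit ▸ List.mem_append.mpr (Or.inr ?_)
            rw [hs]; exact List.mem_append.mpr (Or.inl h)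
        have hBSV : B ++ S ++ V = s := by
          rw [hs, hsplit2, List.append_assoc]
        -- the strip swap
        have hπ : idPerm k ++ T = idPerm k ++ X ++ B ++ S ++ V := by
          rw [hsplit, hs, hsplit2]; simp [List.append_assoc]
        have hswap : StripSwap (idPerm k ++ T) (idPerm k ++ S ++ B ++ X ++ V) := by
          refine ⟨idPerm k, X, B, S, V, hπ, rfl, hXne, hSne, hrunX, hrunS, ?_, ?_, ?_, ?_⟩
          · -- noLink (idPerm k).getLast? X.head?
            intro a ha b hb
            rw [getLast?_idPerm] at ha
            rw [hXc] at hb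
            simp at hb
            subst hb
            split at ha
            · simp at ha
            · simp at ha
              omega
          · rw [hBSV]; exact hlinkX
          · -- noLink (idPerm k ++ X ++ B).getLast? S.head?
            intro a ha b hb
            rw [hSc, hs0] at hb; simp at hb; subst hb
            have haT : a ∈ T := by
              rw [Option.mem_def, List.append_assoc] at ha
              have hmem := mem_of_getLast?_append (by simp [hXne]) ha
              rcases List.mem_append.mp hmem with h | h
              · exact hBXVsubT a (Or.inl h)
              · exact hBXVsubT a (Or.inr h)
            intro hcontra
            have : a = k := by omega
            exact hknotT (this ▸ haT)
          · exact hlinkS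
        -- rewrite π' into prefix form
        have hπ' : idPerm k ++ S ++ B ++ X ++ V = idPerm (k + (S'.length + 1)) ++ (B ++ X ++ V) := by
          rw [hSr, ← idPerm_append_run]
          simp [List.append_assoc]
        have hpermπ' : (idPerm k ++ S ++ B ++ X ++ V).Perm (idPerm n) := by
          refine List.Perm.trans ?_ (hπ ▸ hp)
          rw [List.perm_iff_count]
          intro c
          simp [List.count_append]
          omega
        have hlen2 : (B ++ X ++ V).length ≤ N := by
          have l1 : T.length = X.length + s.length := by rw [hsplit]; simp
          have l2 : s.length = B.length + (1 + r.length) := by rw [hs]; simp only [List.length_append, List.length_cons]; omega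
          have l3 : r.length + 1 = S.length + V.length := by
            have := congrArg List.length hsplit2; simpa using this
          have l4 : 0 < S.length := List.length_pos_iff.mpr hSne
          have l5 : 0 < X.length := List.length_pos_iff.mpr hXne
          simp only [List.length_append]
          omega
        obtain ⟨m, hm⟩ := ih (B ++ X ++ V) (k + (S'.length + 1)) hlen2 (hπ' ▸ hpermπ')
        exact ⟨m + 1, idPerm k ++ S ++ B ++ X ++ V, hswap, hπ' ▸ hm⟩


/-- `SSD(π) ≥ ⌈(#strips(π) − 1)/4⌉`. -/
theorem SSD_ge_strips_bound (n : ℕ) (π : List ℕ) (hperm : π.Perm (idPerm n)) :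
    SSD n π ≥ (numStrips π - 1 + 3) / 4 := by
  have hne : {m | StepsTo StripSwap m π (idPerm n)}.Nonempty := by
    obtain ⟨m, hm⟩ := sortable n π.length π 0 le_rfl (by simpa [idPerm] using hperm)
    exact ⟨m, by simpa [idPerm] using hm⟩
  have hmem := Nat.sInf_mem hne
  have hb := steps_bound _ _ _ hmem
  have hid : numStrips (idPerm n) ≤ 1 := by
    by_cases h : idPerm n = []
    · simp [numStrips, h]
    · have hz : breaks (idPerm n) = 0 := run_breaks (by rw [idPerm]; exact isRun_range' n 1)
      simp [numStrips, h, hz]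
  rw [ge_iff_le, SSD]
  omega
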